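/- Let X_1,…,X_n be drawn from a product distribution on 𝒳^n and let M be a k-pass streaming algorithm with private randomness R. Then for all i ∈ {1,…,k} and all j, ℓ ∈ [n] with j ≥ ℓ: (1) I(X_{[ℓ,j]}, R_{(≤k,[ℓ,j])}; X_{[1,ℓ-1]}, R_{(≤k,[1,ℓ-1])}, X_{[j+1,n]}, R_{(≤k,[j+1,n])} | M_{(≤i,ℓ-1)}, M_{(≤i-1,j)}) = 0; and (2) I(X_{[ℓ,j]}, R_{(≤k,[ℓ,j])}; X_{[1,ℓ-1]}, R_{(≤k,[1,ℓ-1])}, X_{[j+1,n]}, R_{(≤k,[j+1,n])} | M_{(≤i,ℓ-1)}, M_{(≤i,j)}) = 0. -/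

import Mathlib

open scoped Classical
open Finset

noncomputable section

namespace MultiPassIC

/-- Probability of an event under a probability mass function `p` on a finite sample space. -/
def pr {Ω : Type} [Fintype Ω] (p : Ω → ℝ) (E : Ω → Prop) : ℝ :=
  ∑ ω, if E ω then p ω else 0

/-- `p` is a probability mass function on the finite type `Ω`. -/
structure IsPMF {Ω : Type} [Fintype Ω] (p : Ω → ℝ) : Prop where
  nonneg : ∀ ω, 0 ≤ p ω
  sum_one : ∑ ω, p ω = 1

/-- Shannon entropy (base 2) of the random variable `A` under `p`. -/
def H {Ω : Type} [Fintype Ω] {α : Type} [Fintype α] (p : Ω → ℝ) (A : Ω → α) : ℝ :=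
  -∑ a, pr p (fun ω => A ω = a) * Real.logb 2 (pr p (fun ω => A ω = a))

/-- Conditional mutual information `I(A ; B ∣ C)` (base 2), with the usual conventions
for vanishing probabilities. -/
def condMI {Ω : Type} [Fintype Ω] {α β γ : Type} [Fintype α] [Fintype β] [Fintype γ]
    (p : Ω → ℝ) (A : Ω → α) (B : Ω → β) (C : Ω → γ) : ℝ :=
  ∑ a, ∑ b, ∑ c,
    pr p (fun ω => A ω = a ∧ B ω = b ∧ C ω = c) *
      Real.logb 2 ((pr p (fun ω => C ω = c) *
          pr p (fun ω => A ω = a ∧ B ω = b ∧ C ω = c)) /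
        (pr p (fun ω => A ω = a ∧ C ω = c) * pr p (fun ω => B ω = b ∧ C ω = c)))

/-- Mutual information `I(A ; B)` (base 2). -/
def MI {Ω : Type} [Fintype Ω] {α β : Type} [Fintype α] [Fintype β]
    (p : Ω → ℝ) (A : Ω → α) (B : Ω → β) : ℝ :=
  condMI p A B (fun _ => (0 : Fin 1))

/-- `X 0, …, X (n-1)` (the first `n` stream elements) are mutually independent under `p`,
i.e. they are drawn from a product distribution. -/
def IsProduct {Ω : Type} [Fintype Ω] {𝒳 : Type} (p : Ω → ℝ) (n : ℕ) (X : ℕ → Ω → 𝒳) : Prop :=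
  ∀ x : ℕ → 𝒳,
    pr p (fun ω => ∀ j < n, X j ω = x j) =
      ∏ j ∈ Finset.range n, pr p (fun ω => X j ω = x j)

/-- A `k`-pass streaming algorithm on the input stream `X 0, …, X (n-1)` (0-indexed;
the paper's `X_j` is `X (j-1)`), over a finite sample space `Ω` with pmf `p`.
`S` is the finite set of memory states, `Rv` the value space of the per-step private
randomness, `init` the initial memory state `M₀`, `R i j` the private randomness used at
step `j` of pass `i` (0-indexed), and `f i j` the corresponding transition function.
The field `indep` states that the initial state, all the per-step random seeds, and the
input stream are mutually independent. -/
structure Alg (Ω : Type) [Fintype Ω] (p : Ω → ℝ) (𝒳 : Type) [Fintype 𝒳]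
    (n k : ℕ) (X : ℕ → Ω → 𝒳) where
  S : Type
  fintS : Fintype S
  Rv : Type
  fintR : Fintype Rv
  init : Ω → S
  R : ℕ → ℕ → Ω → Rv
  f : ℕ → ℕ → 𝒳 → S → Rv → S
  indep : ∀ (m : S) (r : ℕ → ℕ → Rv) (x : ℕ → 𝒳),
    pr p (fun ω => init ω = m ∧ (∀ i < k, ∀ j < n, R i j ω = r i j) ∧ (∀ j < n, X j ω = x j))
      = pr p (fun ω => init ω = m)
        * (∏ i ∈ Finset.range k, ∏ j ∈ Finset.range n, pr p (fun ω => R i j ω = r i j))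
        * pr p (fun ω => ∀ j < n, X j ω = x j)

attribute [instance] Alg.fintS Alg.fintR

variable {Ω : Type} [Fintype Ω] {p : Ω → ℝ} {𝒳 : Type} [Fintype 𝒳] {n k : ℕ} {X : ℕ → Ω → 𝒳}

/-- Running pass `i` (0-indexed) of the algorithm for `j` steps starting from `ini`. -/
def Alg.runPass (M : Alg Ω p 𝒳 n k X) (i : ℕ) (ini : Ω → M.S) : ℕ → Ω → M.S
  | 0 => ini
  | j + 1 => fun ω =>
      if j < n ∧ i < k then
        M.f i j (X j ω) (M.runPass i ini j ω) (M.R i j ω)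
      else M.runPass i ini j ω

/-- `M.passEnd i` is the memory state at the end of pass `i`; `M.passEnd 0 = M₀` is the
initial state, and `M.passEnd i` is the paper's `M_i = M_{(i,n)}`. -/
def Alg.passEnd (M : Alg Ω p 𝒳 n k X) : ℕ → Ω → M.S
  | 0 => M.init
  | i + 1 => M.runPass i (M.passEnd i) n

/-- `M.st i j` is the memory state after reading `j` elements in pass `i+1`;
it is the paper's `M_{(i+1, j)}`. -/
def Alg.st (M : Alg Ω p 𝒳 n k X) (i j : ℕ) : Ω → M.S :=
  M.runPass i (M.passEnd i) j

/-- The multi-pass information cost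
`MIC(M, μ) = Σ_{i=1}^{k} Σ_{j=1}^{n} Σ_{ℓ=1}^{j} I(M_{(i,j)}; X_ℓ | M_{(≤i,ℓ-1)}, M_{(≤i-1,j)})
  + Σ_{i=1}^{k} Σ_{j=1}^{n} Σ_{ℓ=j+1}^{n} I(M_{(i,j)}; X_ℓ | M_{(≤i-1,ℓ-1)}, M_{(≤i-1,j)})`
(all summation indices below are 0-indexed shifts of the paper's 1-indexed ones). -/
def Alg.MIC (M : Alg Ω p 𝒳 n k X) : ℝ :=
  (∑ i ∈ Finset.range k, ∑ j ∈ Finset.range n, ∑ l ∈ Finset.range (j + 1),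
    condMI p (M.st i (j + 1)) (X l)
      (fun ω => ((fun r : Fin (i + 1) => M.st r.1 l ω),
                 (fun r : Fin i => M.st r.1 (j + 1) ω))))
  + (∑ i ∈ Finset.range k, ∑ j ∈ Finset.range n, ∑ l ∈ Finset.Ico (j + 1) n,
    condMI p (M.st i (j + 1)) (X l)
      (fun ω => ((fun r : Fin i => M.st r.1 l ω),
                 (fun r : Fin i => M.st r.1 (j + 1) ω))))

/-- The conditional information cost
`MIC_cond(M, μ) = Σ_{j=1}^{n} Σ_{ℓ=1}^{j} I(M_{(≤k,j)}; X_ℓ | M_{<k}, M_{(≤k,ℓ-1)})`. -/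
def Alg.MICcond (M : Alg Ω p 𝒳 n k X) : ℝ :=
  ∑ j ∈ Finset.range n, ∑ l ∈ Finset.range (j + 1),
    condMI p (fun ω => fun r : Fin k => M.st r.1 (j + 1) ω) (X l)
      (fun ω => ((fun r : Fin k => M.passEnd r.1 ω),
                 (fun r : Fin k => M.st r.1 l ω)))

end MultiPassIC

namespace MultiPassIC

section Aux

variable {Ω : Type} [Fintype Ω] {p : Ω → ℝ}

lemma pr_nonneg (hp : ∀ ω, 0 ≤ p ω) (E : Ω → Prop) : 0 ≤ pr p E := by
  unfold pr
  exact Finset.sum_nonneg fun ω _ => by split; exacts [hp ω, le_rfl]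

lemma pr_congr {E F : Ω → Prop} (h : ∀ ω, E ω ↔ F ω) : pr p E = pr p F := by
  unfold pr
  exact Finset.sum_congr rfl fun ω _ => by simp [h ω]

lemma pr_and_const (E : Ω → Prop) (c : Prop) [Decidable c] :
    pr p (fun ω => E ω ∧ c) = (if c then (1:ℝ) else 0) * pr p E := by
  by_cases hc : c <;> simp [hc, pr]

/-- Partitioning an event according to the value of a random variable. -/
lemma pr_partition {V : Type} [Fintype V] (E : Ω → Prop) (f : Ω → V) :
    pr p E = ∑ v, pr p (fun ω => E ω ∧ f ω = v) := by
  unfold pr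
  rw [Finset.sum_comm]
  refine Finset.sum_congr rfl fun ω _ => ?_
  by_cases hE : E ω
  · rw [Finset.sum_eq_single (f ω)]
    · simp [hE]
    · intro b _ hb
      rw [if_neg]
      rintro ⟨-, h⟩
      exact hb h.symm
    · intro h
      exact absurd (Finset.mem_univ _) h
  · simp [hE]

/-- If the joint distribution of `(A, B)` given each value of `C` factorizes, then
the conditional mutual information `I(A;B|C)` vanishes. -/
lemma condMI_eq_zero_of_factor {α β γ : Type} [Fintype α] [Fintype β] [Fintype γ]
    (hp : ∀ ω, 0 ≤ p ω) (A : Ω → α) (B : Ω → β) (C : Ω → γ)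
    (fα : α → γ → ℝ) (fβ : β → γ → ℝ)
    (hα : ∀ a c, 0 ≤ fα a c) (hβ : ∀ b c, 0 ≤ fβ b c)
    (hfac : ∀ a b c, pr p (fun ω => A ω = a ∧ B ω = b ∧ C ω = c) = fα a c * fβ b c) :
    condMI p A B C = 0 := by
  have hAC : ∀ a c, pr p (fun ω => A ω = a ∧ C ω = c)
      = fα a c * ∑ b, fβ b c := by
    intro a c
    rw [pr_partition (fun ω => A ω = a ∧ C ω = c) B, Finset.mul_sum]
    refine Finset.sum_congr rfl fun b _ => ?_
    rw [← hfac a b c]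
    exact pr_congr fun ω => by tauto
  have hBC : ∀ b c, pr p (fun ω => B ω = b ∧ C ω = c)
      = (∑ a, fα a c) * fβ b c := by
    intro b c
    rw [pr_partition (fun ω => B ω = b ∧ C ω = c) A, Finset.sum_mul]
    refine Finset.sum_congr rfl fun a _ => ?_
    rw [← hfac a b c]
    exact pr_congr fun ω => by tauto
  have hC : ∀ c, pr p (fun ω => C ω = c) = (∑ a, fα a c) * (∑ b, fβ b c) := by
    intro c
    rw [pr_partition (fun ω => C ω = c) A, Finset.sum_mul]
    refine Finset.sum_congr rfl fun a _ => ?_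
    rw [← hAC a c]
    exact pr_congr fun ω => by tauto
  unfold condMI
  refine Finset.sum_eq_zero fun a _ => Finset.sum_eq_zero fun b _ =>
    Finset.sum_eq_zero fun c _ => ?_
  rw [hfac a b c, hAC a c, hBC b c, hC c]
  by_cases h0 : fα a c * fβ b c = 0
  · rw [h0, zero_mul]
  · have ha : 0 < fα a c := lt_of_le_of_ne (hα a c) (by rintro h; exact h0 (by rw [← h, zero_mul]))
    have hb : 0 < fβ b c := lt_of_le_of_ne (hβ b c) (by rintro h; exact h0 (by rw [← h, mul_zero]))
    have hsa : 0 < ∑ a', fα a' c :=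
      lt_of_lt_of_le ha (Finset.single_le_sum (fun a' _ => hα a' c) (Finset.mem_univ a))
    have hsb : 0 < ∑ b', fβ b' c :=
      lt_of_lt_of_le hb (Finset.single_le_sum (fun b' _ => hβ b' c) (Finset.mem_univ b))
    have : (∑ a', fα a' c) * (∑ b', fβ b' c) * (fα a c * fβ b c) /
        (fα a c * (∑ b', fβ b' c) * ((∑ a', fα a' c) * fβ b c)) = 1 := by
      field_simp
    rw [this, Real.logb_one, mul_zero]

end Aux

section Pure

/-- Iterate the per-column transition `g` starting at column `a`, for `t` steps. -/
def runAux {S : Type} (g : ℕ → S → S) (a : ℕ) (s : S) : ℕ → S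
  | 0 => s
  | t + 1 => g (a + t) (runAux g a s t)

lemma runAux_add {S : Type} (g : ℕ → S → S) (a : ℕ) (s : S) (t u : ℕ) :
    runAux g a s (t + u) = runAux g (a + t) (runAux g a s t) u := by
  induction u with
  | zero => rfl
  | succ u ih =>
      show g (a + (t + u)) (runAux g a s (t + u)) = g (a + t + u) _
      rw [ih, Nat.add_assoc]

lemma runAux_split {S : Type} (g : ℕ → S → S) (s : S) (a b : ℕ) (h : a ≤ b) :
    runAux g 0 s b = runAux g a (runAux g 0 s a) (b - a) := by
  conv_lhs => rw [show b = a + (b - a) by omega]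
  rw [runAux_add, Nat.zero_add]

lemma runAux_congr {S : Type} {g g' : ℕ → S → S} (a t : ℕ)
    (h : ∀ q, a ≤ q → q < a + t → g q = g' q) (s : S) :
    runAux g a s t = runAux g' a s t := by
  induction t with
  | zero => rfl
  | succ t ih =>
      show g (a + t) _ = g' (a + t) _
      rw [h (a + t) (by omega) (by omega), ih fun q h1 h2 => h q h1 (by omega)]

/-- Simple iteration of a step function. -/
def chainIter {S : Type} (F : ℕ → S → S) (m0 : S) : ℕ → S
  | 0 => m0
  | r + 1 => F r (chainIter F m0 r)

variable {Ω : Type} [Fintype Ω] {p : Ω → ℝ} {𝒳 : Type} [Fintype 𝒳] {n k : ℕ} {X : ℕ → Ω → 𝒳}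

/-- The per-column transition of pass `i`, as a pure function of an input stream `x`
and random seeds `rr`. -/
def stepFun (M : Alg Ω p 𝒳 n k X) (x : ℕ → 𝒳) (rr : ℕ → ℕ → M.Rv) (i q : ℕ)
    (s : M.S) : M.S :=
  if q < n ∧ i < k then M.f i q (x q) s (rr i q) else s

/-- The pure (deterministic) analogue of `Alg.passEnd`. -/
def purePE (M : Alg Ω p 𝒳 n k X) (x : ℕ → 𝒳) (rr : ℕ → ℕ → M.Rv) (m0 : M.S) : ℕ → M.S
  | 0 => m0
  | i + 1 => runAux (stepFun M x rr i) 0 (purePE M x rr m0 i) n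

/-- The pure (deterministic) analogue of `Alg.st`. -/
def pureSt (M : Alg Ω p 𝒳 n k X) (x : ℕ → 𝒳) (rr : ℕ → ℕ → M.Rv) (m0 : M.S)
    (i q : ℕ) : M.S :=
  runAux (stepFun M x rr i) 0 (purePE M x rr m0 i) q

lemma runPass_eq_runAux (M : Alg Ω p 𝒳 n k X) (i : ℕ) (ini : Ω → M.S) (ω : Ω) (q : ℕ) :
    M.runPass i ini q ω =
      runAux (fun q' s => if q' < n ∧ i < k then M.f i q' (X q' ω) s (M.R i q' ω) else s)
        0 (ini ω) q := by
  induction q with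
  | zero => rfl
  | succ q ih =>
      show (if q < n ∧ i < k then _ else _) = _
      rw [ih]
      show _ = (fun q' s => if q' < n ∧ i < k then M.f i q' (X q' ω) s (M.R i q' ω) else s)
        (0 + q) (runAux _ 0 (ini ω) q)
      rw [Nat.zero_add]

lemma st_eq_pureSt (M : Alg Ω p 𝒳 n k X) (ω : Ω) (x : ℕ → 𝒳) (rr : ℕ → ℕ → M.Rv)
    (hX : ∀ q < n, X q ω = x q) (hR : ∀ i' < k, ∀ q < n, M.R i' q ω = rr i' q)
    (hstep : True) :
    (∀ i, M.passEnd i ω = purePE M x rr (M.init ω) i) ∧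
      ∀ i q, M.st i q ω = pureSt M x rr (M.init ω) i q := by
  have hg : ∀ i, (fun q' s => if q' < n ∧ i < k then M.f i q' (X q' ω) s (M.R i q' ω) else s)
      = stepFun M x rr i := by
    intro i
    funext q s
    unfold stepFun
    by_cases h : q < n ∧ i < k
    · rw [if_pos h, if_pos h, hX q h.1, hR i h.2 q h.1]
    · rw [if_neg h, if_neg h]
  have hpe : ∀ i, M.passEnd i ω = purePE M x rr (M.init ω) i := by
    intro i
    induction i with
    | zero => rfl
    | succ i ih =>
        show M.runPass i (M.passEnd i) n ω = _
        rw [runPass_eq_runAux, hg i, ih]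
        rfl
  refine ⟨hpe, fun i q => ?_⟩
  unfold Alg.st pureSt
  rw [runPass_eq_runAux, hg i, hpe i]

end Pure

section Chain

variable {S : Type}

/-- The key combinatorial decoupling: fixing the memory states at the two boundary
columns splits the trajectory constraints into an "inside" part and an "outside" part. -/
lemma chain_factorization (Lf If Rf : ℕ → S → S) (m0 : S) (i i' : ℕ)
    (h1 : i' ≤ i) (h2 : i ≤ i' + 1) (c1 : Fin i → S) (c2 : Fin i' → S) :
    ((∀ r : Fin i, Lf r.1 (chainIter (fun q s => Rf q (If q (Lf q s))) m0 r.1) = c1 r) ∧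
     (∀ r : Fin i', If r.1 (Lf r.1 (chainIter (fun q s => Rf q (If q (Lf q s))) m0 r.1)) = c2 r))
    ↔ ((∀ r : Fin i', If r.1 (c1 ⟨r.1, lt_of_lt_of_le r.2 h1⟩) = c2 r) ∧
       (∀ r : Fin i,
         Lf r.1 (chainIter (fun q s => Rf q (if h : q < i' then c2 ⟨q, h⟩ else s)) m0 r.1)
           = c1 r)) := by
  set pe := chainIter (fun q s => Rf q (If q (Lf q s))) m0 with hpe
  set t := chainIter (fun q s => Rf q (if h : q < i' then c2 ⟨q, h⟩ else s)) m0 with ht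
  constructor
  · rintro ⟨hL, hI⟩
    have key : ∀ r, r < i → t r = pe r := by
      intro r
      induction r with
      | zero => intro _; rfl
      | succ r ih =>
          intro hr
          have hri' : r < i' := by omega
          show Rf r (if h : r < i' then c2 ⟨r, h⟩ else t r) = Rf r (If r (Lf r (pe r)))
          rw [dif_pos hri', ← hI ⟨r, hri'⟩]
    constructor
    · intro r
      rw [← hL ⟨r.1, lt_of_lt_of_le r.2 h1⟩, hI r]
    · intro r
      rw [key r.1 r.2, hL r]
  · rintro ⟨hIn, hOut⟩
    have key : ∀ r, r < i → pe r = t r := by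
      intro r
      induction r with
      | zero => intro _; rfl
      | succ r ih =>
          intro hr
          have hri : r < i := by omega
          have hri' : r < i' := by omega
          show Rf r (If r (Lf r (pe r))) = Rf r (if h : r < i' then c2 ⟨r, h⟩ else t r)
          rw [dif_pos hri', ih hri, hOut ⟨r, hri⟩, hIn ⟨r, hri'⟩]
    constructor
    · intro r
      rw [key r.1 r.2, hOut r]
    · intro r
      have hri : r.1 < i := lt_of_lt_of_le r.2 h1
      rw [key r.1 hri, hOut ⟨r.1, hri⟩, hIn r]
  
end Chain

section Seg

variable {Ω : Type} [Fintype Ω] {p : Ω → ℝ} {𝒳 : Type} [Fintype 𝒳] {n k : ℕ} {X : ℕ → Ω → 𝒳}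

/-- Stream values on the inside block `[l, j]`, read off from `a1`. -/
def xin (d : 𝒳) (l j : ℕ) (a1 : Fin (j - l + 1) → 𝒳) (q : ℕ) : 𝒳 :=
  if h : l ≤ q ∧ q ≤ j then a1 ⟨q - l, by omega⟩ else d

/-- Random seeds on the inside block, read off from `a2`. -/
def rin (M : Alg Ω p 𝒳 n k X) (d : M.Rv) (l j : ℕ)
    (a2 : Fin k → Fin (j - l + 1) → M.Rv) (i q : ℕ) : M.Rv :=
  if h : l ≤ q ∧ q ≤ j ∧ i < k then a2 ⟨i, h.2.2⟩ ⟨q - l, by omega⟩ else d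

/-- Stream values on the outside blocks `[0, l) ∪ [j+1, n)`, read off from `b1, b3`. -/
def xout (d : 𝒳) (l j : ℕ) (b1 : Fin l → 𝒳) (b3 : Fin (n - (j + 1)) → 𝒳) (q : ℕ) : 𝒳 :=
  if h : q < l then b1 ⟨q, h⟩
  else if h' : j + 1 ≤ q ∧ q < n then b3 ⟨q - (j + 1), by omega⟩ else d

/-- Random seeds on the outside blocks, read off from `b2, b4`. -/
def rout (M : Alg Ω p 𝒳 n k X) (d : M.Rv) (l j : ℕ)
    (b2 : Fin k → Fin l → M.Rv) (b4 : Fin k → Fin (n - (j + 1)) → M.Rv) (i q : ℕ) : M.Rv :=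
  if h : i < k then
    (if h2 : q < l then b2 ⟨i, h⟩ ⟨q, h2⟩
     else if h3 : j + 1 ≤ q ∧ q < n then b4 ⟨i, h⟩ ⟨q - (j + 1), by omega⟩ else d)
  else d

/-- Combine an inside assignment and an outside assignment into a full one. -/
def comb {T : Type} (l j : ℕ) (ti tou : ℕ → T) (q : ℕ) : T :=
  if l ≤ q ∧ q ≤ j then ti q else tou q

/-- Combine for the doubly-indexed seeds. -/
def comb2 {T : Type} (l j : ℕ) (ti tou : ℕ → ℕ → T) (i q : ℕ) : T :=
  if l ≤ q ∧ q ≤ j then ti i q else tou i q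

variable (M : Alg Ω p 𝒳 n k X)

/-- The inside transition of pass `r` (from column `l` to column `j+1`);
depends only on the inside data `a1, a2`. -/
def IfunA (d𝒳 : 𝒳) (dR : M.Rv) (l j : ℕ) (a1 : Fin (j - l + 1) → 𝒳)
    (a2 : Fin k → Fin (j - l + 1) → M.Rv) (r : ℕ) (s : M.S) : M.S :=
  runAux (stepFun M (xin d𝒳 l j a1) (rin M dR l j a2) r) l s (j + 1 - l)

/-- The left-outside transition of pass `r` (from column `0` to column `l`);
depends only on the outside data. -/
def LfunB (d𝒳 : 𝒳) (dR : M.Rv) (l j : ℕ) (b1 : Fin l → 𝒳) (b2 : Fin k → Fin l → M.Rv)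
    (b3 : Fin (n - (j + 1)) → 𝒳) (b4 : Fin k → Fin (n - (j + 1)) → M.Rv)
    (r : ℕ) (s : M.S) : M.S :=
  runAux (stepFun M (xout d𝒳 l j b1 b3) (rout M dR l j b2 b4) r) 0 s l

/-- The right-outside transition of pass `r` (from column `j+1` to column `n`);
depends only on the outside data. -/
def RfunB (d𝒳 : 𝒳) (dR : M.Rv) (l j : ℕ) (b1 : Fin l → 𝒳) (b2 : Fin k → Fin l → M.Rv)
    (b3 : Fin (n - (j + 1)) → 𝒳) (b4 : Fin k → Fin (n - (j + 1)) → M.Rv)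
    (r : ℕ) (s : M.S) : M.S :=
  runAux (stepFun M (xout d𝒳 l j b1 b3) (rout M dR l j b2 b4) r) (j + 1) s (n - (j + 1))

variable (d𝒳 : 𝒳) (dR : M.Rv) (l j : ℕ)
  (a1 : Fin (j - l + 1) → 𝒳) (a2 : Fin k → Fin (j - l + 1) → M.Rv)
  (b1 : Fin l → 𝒳) (b2 : Fin k → Fin l → M.Rv)
  (b3 : Fin (n - (j + 1)) → 𝒳) (b4 : Fin k → Fin (n - (j + 1)) → M.Rv)

/-- Abbreviation for the combined full stream. -/
def xfull : ℕ → 𝒳 := comb l j (xin d𝒳 l j a1) (xout d𝒳 l j b1 b3)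

/-- Abbreviation for the combined full seeds. -/
def rfull : ℕ → ℕ → M.Rv := comb2 l j (rin M dR l j a2) (rout M dR l j b2 b4)

lemma stepFun_in (r q : ℕ) (h : l ≤ q ∧ q ≤ j) :
    stepFun M (xfull d𝒳 l j a1 b1 b3) (rfull M dR l j a2 b2 b4) r q
      = stepFun M (xin d𝒳 l j a1) (rin M dR l j a2) r q := by
  funext s
  unfold stepFun xfull rfull comb comb2
  by_cases hg : q < n ∧ r < k
  · rw [if_pos hg, if_pos hg, if_pos h, if_pos h]
  · rw [if_neg hg, if_neg hg]

lemma stepFun_out (r q : ℕ) (h : ¬(l ≤ q ∧ q ≤ j)) :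
    stepFun M (xfull d𝒳 l j a1 b1 b3) (rfull M dR l j a2 b2 b4) r q
      = stepFun M (xout d𝒳 l j b1 b3) (rout M dR l j b2 b4) r q := by
  funext s
  unfold stepFun xfull rfull comb comb2
  by_cases hg : q < n ∧ r < k
  · rw [if_pos hg, if_pos hg, if_neg h, if_neg h]
  · rw [if_neg hg, if_neg hg]

lemma pureSt_l (hlj : l ≤ j) (m0 : M.S) (r : ℕ) :
    pureSt M (xfull d𝒳 l j a1 b1 b3) (rfull M dR l j a2 b2 b4) m0 r l
      = LfunB M d𝒳 dR l j b1 b2 b3 b4 r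
          (purePE M (xfull d𝒳 l j a1 b1 b3) (rfull M dR l j a2 b2 b4) m0 r) := by
  unfold pureSt LfunB
  exact runAux_congr 0 l (fun q h1 h2 => stepFun_out M d𝒳 dR l j a1 a2 b1 b2 b3 b4 r q
    (by omega)) _

lemma pureSt_j1 (hlj : l ≤ j) (m0 : M.S) (r : ℕ) :
    pureSt M (xfull d𝒳 l j a1 b1 b3) (rfull M dR l j a2 b2 b4) m0 r (j + 1)
      = IfunA M d𝒳 dR l j a1 a2 r
          (pureSt M (xfull d𝒳 l j a1 b1 b3) (rfull M dR l j a2 b2 b4) m0 r l) := by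
  unfold pureSt IfunA
  rw [runAux_split _ _ l (j + 1) (by omega)]
  exact runAux_congr l (j + 1 - l) (fun q h1 h2 => stepFun_in M d𝒳 dR l j a1 a2 b1 b2 b3 b4 r q
    (by omega)) _

lemma purePE_succ (hlj : l ≤ j) (hjn : j < n) (m0 : M.S) (r : ℕ) :
    purePE M (xfull d𝒳 l j a1 b1 b3) (rfull M dR l j a2 b2 b4) m0 (r + 1)
      = RfunB M d𝒳 dR l j b1 b2 b3 b4 r
          (pureSt M (xfull d𝒳 l j a1 b1 b3) (rfull M dR l j a2 b2 b4) m0 r (j + 1)) := by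
  show runAux _ 0 _ n = _
  unfold RfunB
  rw [runAux_split _ _ (j + 1) n (by omega)]
  exact runAux_congr (j + 1) (n - (j + 1)) (fun q h1 h2 => stepFun_out M d𝒳 dR l j a1 a2
    b1 b2 b3 b4 r q (by omega)) _

lemma purePE_eq_chainIter (hlj : l ≤ j) (hjn : j < n) (m0 : M.S) (r : ℕ) :
    purePE M (xfull d𝒳 l j a1 b1 b3) (rfull M dR l j a2 b2 b4) m0 r
      = chainIter (fun q s => RfunB M d𝒳 dR l j b1 b2 b3 b4 q
          (IfunA M d𝒳 dR l j a1 a2 q (LfunB M d𝒳 dR l j b1 b2 b3 b4 q s))) m0 r := by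
  induction r with
  | zero => rfl
  | succ r ih =>
      rw [purePE_succ M d𝒳 dR l j a1 a2 b1 b2 b3 b4 hlj hjn,
        pureSt_j1 M d𝒳 dR l j a1 a2 b1 b2 b3 b4 hlj,
        pureSt_l M d𝒳 dR l j a1 a2 b1 b2 b3 b4 hlj, ih]
      rfl

lemma AB_iff (hlj : l ≤ j) (hjn : j < n) (ω : Ω) :
    ((fun r : Fin (j - l + 1) => X (l + r.1) ω) = a1
      ∧ (fun (i' : Fin k) (r : Fin (j - l + 1)) => M.R i'.1 (l + r.1) ω) = a2
      ∧ (fun r : Fin l => X r.1 ω) = b1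
      ∧ (fun (i' : Fin k) (r : Fin l) => M.R i'.1 r.1 ω) = b2
      ∧ (fun r : Fin (n - (j + 1)) => X (j + 1 + r.1) ω) = b3
      ∧ (fun (i' : Fin k) (r : Fin (n - (j + 1))) => M.R i'.1 (j + 1 + r.1) ω) = b4)
    ↔ ((∀ q < n, X q ω = xfull d𝒳 l j a1 b1 b3 q)
      ∧ (∀ i'' < k, ∀ q < n, M.R i'' q ω = rfull M dR l j a2 b2 b4 i'' q)) := by
  simp only [funext_iff]
  constructor
  · rintro ⟨ha1, ha2, hb1, hb2, hb3, hb4⟩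
    constructor
    · intro q hq
      unfold xfull comb xin xout
      by_cases h : l ≤ q ∧ q ≤ j
      · rw [if_pos h, dif_pos (by omega : l ≤ q ∧ q ≤ j), ← ha1 ⟨q - l, by omega⟩]
        congr 1
        simp only [Fin.val_mk]
        omega
      · rw [if_neg h]
        by_cases h2 : q < l
        · rw [dif_pos h2, ← hb1 ⟨q, h2⟩]
        · rw [dif_neg h2, dif_pos (by omega : j + 1 ≤ q ∧ q < n), ← hb3 ⟨q - (j + 1), by omega⟩]
          congr 1
          simp only [Fin.val_mk]
          omega
    · intro i'' hi'' q hq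
      unfold rfull comb2 rin rout
      by_cases h : l ≤ q ∧ q ≤ j
      · rw [if_pos h, dif_pos (by omega : l ≤ q ∧ q ≤ j ∧ i'' < k),
          ← ha2 ⟨i'', hi''⟩ ⟨q - l, by omega⟩]
        congr 1
        simp only [Fin.val_mk]
        omega
      · rw [if_neg h, dif_pos hi'']
        by_cases h2 : q < l
        · rw [dif_pos h2, ← hb2 ⟨i'', hi''⟩ ⟨q, h2⟩]
        · rw [dif_neg h2, dif_pos (by omega : j + 1 ≤ q ∧ q < n),
            ← hb4 ⟨i'', hi''⟩ ⟨q - (j + 1), by omega⟩]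
          congr 1
          simp only [Fin.val_mk]
          omega
  · rintro ⟨hX, hR⟩
    refine ⟨fun r => ?_, fun i'' r => ?_, fun r => ?_, fun i'' r => ?_, fun r => ?_,
      fun i'' r => ?_⟩
    · have hr2 := r.2
      rw [hX (l + r.1) (by omega)]
      unfold xfull comb xin
      rw [if_pos (by omega : l ≤ l + r.1 ∧ l + r.1 ≤ j),
        dif_pos (by omega : l ≤ l + r.1 ∧ l + r.1 ≤ j)]
      congr 1
      exact Fin.ext (by simp only [Fin.val_mk]; omega)
    · have hr2 := r.2
      rw [hR i''.1 i''.2 (l + r.1) (by omega)]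
      unfold rfull comb2 rin
      rw [if_pos (by omega : l ≤ l + r.1 ∧ l + r.1 ≤ j),
        dif_pos (by omega : l ≤ l + r.1 ∧ l + r.1 ≤ j ∧ i''.1 < k)]
      congr 1
      exact Fin.ext (by simp only [Fin.val_mk]; omega)
    · have hr2 := r.2
      rw [hX r.1 (by omega)]
      unfold xfull comb xout
      rw [if_neg (by omega), dif_pos r.2]
    · have hr2 := r.2
      rw [hR i''.1 i''.2 r.1 (by omega)]
      unfold rfull comb2 rout
      rw [if_neg (by omega), dif_pos i''.2, dif_pos r.2]
    · have hr2 := r.2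
      rw [hX (j + 1 + r.1) (by omega)]
      unfold xfull comb xout
      rw [if_neg (by omega), dif_neg (by omega), dif_pos (by omega : j + 1 ≤ j + 1 + r.1 ∧ j + 1 + r.1 < n)]
      congr 1
      exact Fin.ext (by simp only [Fin.val_mk]; omega)
    · have hr2 := r.2
      rw [hR i''.1 i''.2 (j + 1 + r.1) (by omega)]
      unfold rfull comb2 rout
      rw [if_neg (by omega), dif_pos i''.2, dif_neg (by omega),
        dif_pos (by omega : j + 1 ≤ j + 1 + r.1 ∧ j + 1 + r.1 < n)]
      congr 1
      exact Fin.ext (by simp only [Fin.val_mk]; omega)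

lemma C_iff (hlj : l ≤ j) (hjn : j < n) (i i' : ℕ) (h1 : i' ≤ i) (h2 : i ≤ i' + 1)
    (c1 : Fin i → M.S) (c2 : Fin i' → M.S) (ω : Ω)
    (hX : ∀ q < n, X q ω = xfull d𝒳 l j a1 b1 b3 q)
    (hR : ∀ i'' < k, ∀ q < n, M.R i'' q ω = rfull M dR l j a2 b2 b4 i'' q) :
    ((fun r : Fin i => M.st r.1 l ω) = c1 ∧ (fun r : Fin i' => M.st r.1 (j + 1) ω) = c2)
    ↔ ((∀ r : Fin i', IfunA M d𝒳 dR l j a1 a2 r.1 (c1 ⟨r.1, lt_of_lt_of_le r.2 h1⟩) = c2 r)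
       ∧ (∀ r : Fin i,
           LfunB M d𝒳 dR l j b1 b2 b3 b4 r.1
             (chainIter (fun q s => RfunB M d𝒳 dR l j b1 b2 b3 b4 q
               (if h : q < i' then c2 ⟨q, h⟩ else s)) (M.init ω) r.1)
             = c1 r)) := by
  obtain ⟨-, hst⟩ := st_eq_pureSt M ω (xfull d𝒳 l j a1 b1 b3) (rfull M dR l j a2 b2 b4)
    hX hR trivial
  simp only [funext_iff]
  have e1 : ∀ r : ℕ, M.st r l ω
      = LfunB M d𝒳 dR l j b1 b2 b3 b4 r
          (chainIter (fun q s => RfunB M d𝒳 dR l j b1 b2 b3 b4 q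
            (IfunA M d𝒳 dR l j a1 a2 q (LfunB M d𝒳 dR l j b1 b2 b3 b4 q s))) (M.init ω) r) := by
    intro r
    rw [hst r l, pureSt_l M d𝒳 dR l j a1 a2 b1 b2 b3 b4 hlj,
      purePE_eq_chainIter M d𝒳 dR l j a1 a2 b1 b2 b3 b4 hlj hjn]
  have e2 : ∀ r : ℕ, M.st r (j + 1) ω
      = IfunA M d𝒳 dR l j a1 a2 r
          (LfunB M d𝒳 dR l j b1 b2 b3 b4 r
            (chainIter (fun q s => RfunB M d𝒳 dR l j b1 b2 b3 b4 q
              (IfunA M d𝒳 dR l j a1 a2 q (LfunB M d𝒳 dR l j b1 b2 b3 b4 q s)))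
              (M.init ω) r)) := by
    intro r
    rw [hst r (j + 1), pureSt_j1 M d𝒳 dR l j a1 a2 b1 b2 b3 b4 hlj,
      pureSt_l M d𝒳 dR l j a1 a2 b1 b2 b3 b4 hlj,
      purePE_eq_chainIter M d𝒳 dR l j a1 a2 b1 b2 b3 b4 hlj hjn]
  simp only [e1, e2]
  exact chain_factorization (LfunB M d𝒳 dR l j b1 b2 b3 b4) (IfunA M d𝒳 dR l j a1 a2)
    (RfunB M d𝒳 dR l j b1 b2 b3 b4) (M.init ω) i i' h1 h2 c1 c2

end Seg

section Main

variable {Ω : Type} [Fintype Ω] {p : Ω → ℝ} {𝒳 : Type} [Fintype 𝒳] {n k : ℕ} {X : ℕ → Ω → 𝒳}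
variable (M : Alg Ω p 𝒳 n k X) (d𝒳 : 𝒳) (dR : M.Rv)

/-- The "inside" factor of the factorized joint distribution. -/
def falpha (l j i i' : ℕ) (h1 : i' ≤ i)
    (a : (Fin (j - l + 1) → 𝒳) × (Fin k → Fin (j - l + 1) → M.Rv))
    (c : (Fin i → M.S) × (Fin i' → M.S)) : ℝ :=
  (if ∀ r : Fin i', IfunA M d𝒳 dR l j a.1 a.2 r.1 (c.1 ⟨r.1, lt_of_lt_of_le r.2 h1⟩) = c.2 r
    then (1:ℝ) else 0)
    * ((∏ q ∈ Finset.Ico l (j + 1), pr p (fun ω => X q ω = xin d𝒳 l j a.1 q))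
       * ∏ i'' ∈ Finset.range k, ∏ q ∈ Finset.Ico l (j + 1),
           pr p (fun ω => M.R i'' q ω = rin M dR l j a.2 i'' q))

/-- The "outside" factor of the factorized joint distribution. -/
def fbeta (l j i i' : ℕ)
    (b : (Fin l → 𝒳) × (Fin k → Fin l → M.Rv)
          × (Fin (n - (j + 1)) → 𝒳) × (Fin k → Fin (n - (j + 1)) → M.Rv))
    (c : (Fin i → M.S) × (Fin i' → M.S)) : ℝ :=
  ∑ m0 : M.S,
    (if ∀ r : Fin i, LfunB M d𝒳 dR l j b.1 b.2.1 b.2.2.1 b.2.2.2 r.1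
          (chainIter (fun q s => RfunB M d𝒳 dR l j b.1 b.2.1 b.2.2.1 b.2.2.2 q
            (if h : q < i' then c.2 ⟨q, h⟩ else s)) m0 r.1) = c.1 r
      then (1:ℝ) else 0)
      * (pr p (fun ω => M.init ω = m0)
        * (((∏ q ∈ Finset.range l, pr p (fun ω => X q ω = xout d𝒳 l j b.1 b.2.2.1 q))
            * ∏ q ∈ Finset.Ico (j + 1) n, pr p (fun ω => X q ω = xout d𝒳 l j b.1 b.2.2.1 q))
          * ∏ i'' ∈ Finset.range k,
              (∏ q ∈ Finset.range l,
                  pr p (fun ω => M.R i'' q ω = rout M dR l j b.2.1 b.2.2.2 i'' q))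
                * ∏ q ∈ Finset.Ico (j + 1) n,
                    pr p (fun ω => M.R i'' q ω = rout M dR l j b.2.1 b.2.2.2 i'' q)))

lemma ite_one_zero_and (A B : Prop) [Decidable A] [Decidable B] [Decidable (A ∧ B)] :
    (if A ∧ B then (1:ℝ) else 0) = (if A then (1:ℝ) else 0) * (if B then (1:ℝ) else 0) := by
  by_cases hA : A <;> by_cases hB : B <;> simp [hA, hB]

lemma main_aux
    (hp : IsPMF p) (hprod : IsProduct p n X)
    (i i' : ℕ) (h1 : i' ≤ i) (h2 : i ≤ i' + 1) (l j : ℕ) (hlj : l ≤ j) (hjn : j < n) :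
    condMI p
      (fun ω => ((fun r : Fin (j - l + 1) => X (l + r.1) ω),
                 (fun (i'' : Fin k) (r : Fin (j - l + 1)) => M.R i''.1 (l + r.1) ω)))
      (fun ω => ((fun r : Fin l => X r.1 ω),
                 (fun (i'' : Fin k) (r : Fin l) => M.R i''.1 r.1 ω),
                 (fun r : Fin (n - (j + 1)) => X (j + 1 + r.1) ω),
                 (fun (i'' : Fin k) (r : Fin (n - (j + 1))) => M.R i''.1 (j + 1 + r.1) ω)))
      (fun ω => ((fun r : Fin i => M.st r.1 l ω),
                 (fun r : Fin i' => M.st r.1 (j + 1) ω))) = 0 := by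
  have hΩ : Nonempty Ω := by
    by_contra h
    rw [not_nonempty_iff] at h
    have h1' := hp.sum_one
    rw [Finset.univ_eq_empty, Finset.sum_empty] at h1'
    exact zero_ne_one h1'
  obtain ⟨ω0⟩ := hΩ
  have d𝒳 : 𝒳 := X 0 ω0
  have dR : M.Rv := M.R 0 0 ω0
  have prn : ∀ E : Ω → Prop, 0 ≤ pr p E := pr_nonneg hp.nonneg
  -- nonnegativity of the two factors
  have hα : ∀ a c, 0 ≤ falpha M d𝒳 dR l j i i' h1 a c := by
    intro a c
    unfold falpha
    refine mul_nonneg (by split <;> norm_num)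
      (mul_nonneg (Finset.prod_nonneg fun q _ => prn _)
        (Finset.prod_nonneg fun i'' _ => Finset.prod_nonneg fun q _ => prn _))
  have hβ : ∀ b c, 0 ≤ fbeta M d𝒳 dR l j i i' b c := by
    intro b c
    unfold fbeta
    refine Finset.sum_nonneg fun m0 _ => mul_nonneg (by split <;> norm_num)
      (mul_nonneg (prn _) (mul_nonneg
        (mul_nonneg (Finset.prod_nonneg fun q _ => prn _)
          (Finset.prod_nonneg fun q _ => prn _))
        (Finset.prod_nonneg fun i'' _ => mul_nonneg (Finset.prod_nonneg fun q _ => prn _)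
          (Finset.prod_nonneg fun q _ => prn _))))
  -- the factorization of the joint distribution
  have hfac : ∀ (a : (Fin (j - l + 1) → 𝒳) × (Fin k → Fin (j - l + 1) → M.Rv))
      (b : (Fin l → 𝒳) × (Fin k → Fin l → M.Rv)
            × (Fin (n - (j + 1)) → 𝒳) × (Fin k → Fin (n - (j + 1)) → M.Rv))
      (c : (Fin i → M.S) × (Fin i' → M.S)),
      pr p (fun ω =>
          ((fun r : Fin (j - l + 1) => X (l + r.1) ω),
           (fun (i'' : Fin k) (r : Fin (j - l + 1)) => M.R i''.1 (l + r.1) ω)) = a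
        ∧ ((fun r : Fin l => X r.1 ω),
           (fun (i'' : Fin k) (r : Fin l) => M.R i''.1 r.1 ω),
           (fun r : Fin (n - (j + 1)) => X (j + 1 + r.1) ω),
           (fun (i'' : Fin k) (r : Fin (n - (j + 1))) => M.R i''.1 (j + 1 + r.1) ω)) = b
        ∧ ((fun r : Fin i => M.st r.1 l ω),
           (fun r : Fin i' => M.st r.1 (j + 1) ω)) = c)
        = falpha M d𝒳 dR l j i i' h1 a c * fbeta M d𝒳 dR l j i i' b c := by
    intro a b c
    have hEv : ∀ ω,
        (((fun r : Fin (j - l + 1) => X (l + r.1) ω),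
           (fun (i'' : Fin k) (r : Fin (j - l + 1)) => M.R i''.1 (l + r.1) ω)) = a
        ∧ ((fun r : Fin l => X r.1 ω),
           (fun (i'' : Fin k) (r : Fin l) => M.R i''.1 r.1 ω),
           (fun r : Fin (n - (j + 1)) => X (j + 1 + r.1) ω),
           (fun (i'' : Fin k) (r : Fin (n - (j + 1))) => M.R i''.1 (j + 1 + r.1) ω)) = b
        ∧ ((fun r : Fin i => M.st r.1 l ω),
           (fun r : Fin i' => M.st r.1 (j + 1) ω)) = c)
        ↔ (((∀ q < n, X q ω = xfull d𝒳 l j a.1 b.1 b.2.2.1 q)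
            ∧ (∀ i'' < k, ∀ q < n, M.R i'' q ω = rfull M dR l j a.2 b.2.1 b.2.2.2 i'' q))
          ∧ ((∀ r : Fin i', IfunA M d𝒳 dR l j a.1 a.2 r.1
                (c.1 ⟨r.1, lt_of_lt_of_le r.2 h1⟩) = c.2 r)
            ∧ (∀ r : Fin i, LfunB M d𝒳 dR l j b.1 b.2.1 b.2.2.1 b.2.2.2 r.1
                (chainIter (fun q s => RfunB M d𝒳 dR l j b.1 b.2.1 b.2.2.1 b.2.2.2 q
                  (if h : q < i' then c.2 ⟨q, h⟩ else s)) (M.init ω) r.1) = c.1 r))) := by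
      intro ω
      simp only [Prod.ext_iff]
      constructor
      · rintro ⟨⟨hA1, hA2⟩, ⟨hB1, hB2, hB3, hB4⟩, hC1, hC2⟩
        have hAB := (AB_iff M d𝒳 dR l j a.1 a.2 b.1 b.2.1 b.2.2.1 b.2.2.2 hlj hjn ω).mp
          ⟨hA1, hA2, hB1, hB2, hB3, hB4⟩
        exact ⟨hAB, (C_iff M d𝒳 dR l j a.1 a.2 b.1 b.2.1 b.2.2.1 b.2.2.2 hlj hjn
          i i' h1 h2 c.1 c.2 ω hAB.1 hAB.2).mp ⟨hC1, hC2⟩⟩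
      · rintro ⟨hAB, hPQ⟩
        obtain ⟨hA1, hA2, hB1, hB2, hB3, hB4⟩ :=
          (AB_iff M d𝒳 dR l j a.1 a.2 b.1 b.2.1 b.2.2.1 b.2.2.2 hlj hjn ω).mpr hAB
        obtain ⟨hC1, hC2⟩ := (C_iff M d𝒳 dR l j a.1 a.2 b.1 b.2.1 b.2.2.1 b.2.2.2 hlj hjn
          i i' h1 h2 c.1 c.2 ω hAB.1 hAB.2).mpr hPQ
        exact ⟨⟨hA1, hA2⟩, ⟨hB1, hB2, hB3, hB4⟩, hC1, hC2⟩
    rw [pr_congr hEv, pr_partition _ M.init]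
    have e2 : ∀ m0 : M.S,
        pr p (fun ω =>
          (((∀ q < n, X q ω = xfull d𝒳 l j a.1 b.1 b.2.2.1 q)
            ∧ (∀ i'' < k, ∀ q < n, M.R i'' q ω = rfull M dR l j a.2 b.2.1 b.2.2.2 i'' q))
          ∧ ((∀ r : Fin i', IfunA M d𝒳 dR l j a.1 a.2 r.1
                (c.1 ⟨r.1, lt_of_lt_of_le r.2 h1⟩) = c.2 r)
            ∧ (∀ r : Fin i, LfunB M d𝒳 dR l j b.1 b.2.1 b.2.2.1 b.2.2.2 r.1
                (chainIter (fun q s => RfunB M d𝒳 dR l j b.1 b.2.1 b.2.2.1 b.2.2.2 q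
                  (if h : q < i' then c.2 ⟨q, h⟩ else s)) (M.init ω) r.1) = c.1 r)))
          ∧ M.init ω = m0)
        = (if ((∀ r : Fin i', IfunA M d𝒳 dR l j a.1 a.2 r.1
                (c.1 ⟨r.1, lt_of_lt_of_le r.2 h1⟩) = c.2 r)
            ∧ (∀ r : Fin i, LfunB M d𝒳 dR l j b.1 b.2.1 b.2.2.1 b.2.2.2 r.1
                (chainIter (fun q s => RfunB M d𝒳 dR l j b.1 b.2.1 b.2.2.1 b.2.2.2 q
                  (if h : q < i' then c.2 ⟨q, h⟩ else s)) m0 r.1) = c.1 r))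
            then (1:ℝ) else 0)
          * (pr p (fun ω => M.init ω = m0)
            * (∏ i'' ∈ Finset.range k, ∏ q ∈ Finset.range n,
                pr p (fun ω => M.R i'' q ω = rfull M dR l j a.2 b.2.1 b.2.2.2 i'' q))
            * ∏ q ∈ Finset.range n, pr p (fun ω => X q ω = xfull d𝒳 l j a.1 b.1 b.2.2.1 q)) := by
      intro m0
      have hEv2 : ∀ ω,
          ((((∀ q < n, X q ω = xfull d𝒳 l j a.1 b.1 b.2.2.1 q)
            ∧ (∀ i'' < k, ∀ q < n, M.R i'' q ω = rfull M dR l j a.2 b.2.1 b.2.2.2 i'' q))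
          ∧ ((∀ r : Fin i', IfunA M d𝒳 dR l j a.1 a.2 r.1
                (c.1 ⟨r.1, lt_of_lt_of_le r.2 h1⟩) = c.2 r)
            ∧ (∀ r : Fin i, LfunB M d𝒳 dR l j b.1 b.2.1 b.2.2.1 b.2.2.2 r.1
                (chainIter (fun q s => RfunB M d𝒳 dR l j b.1 b.2.1 b.2.2.1 b.2.2.2 q
                  (if h : q < i' then c.2 ⟨q, h⟩ else s)) (M.init ω) r.1) = c.1 r)))
          ∧ M.init ω = m0)
          ↔ ((M.init ω = m0
              ∧ (∀ i'' < k, ∀ q < n, M.R i'' q ω = rfull M dR l j a.2 b.2.1 b.2.2.2 i'' q)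
              ∧ (∀ q < n, X q ω = xfull d𝒳 l j a.1 b.1 b.2.2.1 q))
            ∧ ((∀ r : Fin i', IfunA M d𝒳 dR l j a.1 a.2 r.1
                (c.1 ⟨r.1, lt_of_lt_of_le r.2 h1⟩) = c.2 r)
            ∧ (∀ r : Fin i, LfunB M d𝒳 dR l j b.1 b.2.1 b.2.2.1 b.2.2.2 r.1
                (chainIter (fun q s => RfunB M d𝒳 dR l j b.1 b.2.1 b.2.2.1 b.2.2.2 q
                  (if h : q < i' then c.2 ⟨q, h⟩ else s)) m0 r.1) = c.1 r))) := by
        intro ω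
        constructor
        · rintro ⟨⟨⟨hX', hR'⟩, hP, hQ⟩, hm⟩
          rw [hm] at hQ
          exact ⟨⟨hm, hR', hX'⟩, hP, hQ⟩
        · rintro ⟨⟨hm, hR', hX'⟩, hP, hQ⟩
          rw [← hm] at hQ
          exact ⟨⟨⟨hX', hR'⟩, hP, hQ⟩, hm⟩
      rw [pr_congr hEv2, pr_and_const,
        M.indep m0 (rfull M dR l j a.2 b.2.1 b.2.2.2) (xfull d𝒳 l j a.1 b.1 b.2.2.1),
        hprod (xfull d𝒳 l j a.1 b.1 b.2.2.1)]
    rw [Finset.sum_congr rfl fun m0 _ => e2 m0]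
    -- split the products over columns
    have hXsplit :
        (∏ q ∈ Finset.range n, pr p (fun ω => X q ω = xfull d𝒳 l j a.1 b.1 b.2.2.1 q))
        = ((∏ q ∈ Finset.range l, pr p (fun ω => X q ω = xout d𝒳 l j b.1 b.2.2.1 q))
            * ∏ q ∈ Finset.Ico l (j + 1), pr p (fun ω => X q ω = xin d𝒳 l j a.1 q))
          * ∏ q ∈ Finset.Ico (j + 1) n, pr p (fun ω => X q ω = xout d𝒳 l j b.1 b.2.2.1 q) := by
      rw [Finset.range_eq_Ico,
        ← Finset.prod_Ico_consecutive _ (Nat.zero_le l) (show l ≤ n by omega),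
        ← Finset.prod_Ico_consecutive _ (show l ≤ j + 1 by omega) (show j + 1 ≤ n by omega),
        ← mul_assoc]
      congr 1
      congr 1
      · rw [← Finset.range_eq_Ico]
        refine Finset.prod_congr rfl fun q hq => ?_
        rw [Finset.mem_range] at hq
        unfold xfull comb
        rw [if_neg (by omega)]
      · refine Finset.prod_congr rfl fun q hq => ?_
        rw [Finset.mem_Ico] at hq
        unfold xfull comb
        rw [if_pos (by omega)]
      · refine Finset.prod_congr rfl fun q hq => ?_
        rw [Finset.mem_Ico] at hq
        unfold xfull comb
        rw [if_neg (by omega)]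
    have hRsplit :
        (∏ i'' ∈ Finset.range k, ∏ q ∈ Finset.range n,
            pr p (fun ω => M.R i'' q ω = rfull M dR l j a.2 b.2.1 b.2.2.2 i'' q))
        = (∏ i'' ∈ Finset.range k, ∏ q ∈ Finset.Ico l (j + 1),
              pr p (fun ω => M.R i'' q ω = rin M dR l j a.2 i'' q))
          * ∏ i'' ∈ Finset.range k,
              ((∏ q ∈ Finset.range l,
                  pr p (fun ω => M.R i'' q ω = rout M dR l j b.2.1 b.2.2.2 i'' q))
                * ∏ q ∈ Finset.Ico (j + 1) n,
                    pr p (fun ω => M.R i'' q ω = rout M dR l j b.2.1 b.2.2.2 i'' q)) := by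
      rw [← Finset.prod_mul_distrib]
      refine Finset.prod_congr rfl fun i'' _ => ?_
      have eL : (∏ q ∈ Finset.range l,
            pr p (fun ω => M.R i'' q ω = rfull M dR l j a.2 b.2.1 b.2.2.2 i'' q))
          = ∏ q ∈ Finset.range l,
              pr p (fun ω => M.R i'' q ω = rout M dR l j b.2.1 b.2.2.2 i'' q) := by
        refine Finset.prod_congr rfl fun q hq => ?_
        rw [Finset.mem_range] at hq
        unfold rfull comb2
        rw [if_neg (by omega)]
      have eI : (∏ q ∈ Finset.Ico l (j + 1),
            pr p (fun ω => M.R i'' q ω = rfull M dR l j a.2 b.2.1 b.2.2.2 i'' q))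
          = ∏ q ∈ Finset.Ico l (j + 1),
              pr p (fun ω => M.R i'' q ω = rin M dR l j a.2 i'' q) := by
        refine Finset.prod_congr rfl fun q hq => ?_
        rw [Finset.mem_Ico] at hq
        unfold rfull comb2
        rw [if_pos (by omega)]
      have eR : (∏ q ∈ Finset.Ico (j + 1) n,
            pr p (fun ω => M.R i'' q ω = rfull M dR l j a.2 b.2.1 b.2.2.2 i'' q))
          = ∏ q ∈ Finset.Ico (j + 1) n,
              pr p (fun ω => M.R i'' q ω = rout M dR l j b.2.1 b.2.2.2 i'' q) := by
        refine Finset.prod_congr rfl fun q hq => ?_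
        rw [Finset.mem_Ico] at hq
        unfold rfull comb2
        rw [if_neg (by omega)]
      rw [Finset.range_eq_Ico,
        ← Finset.prod_Ico_consecutive _ (Nat.zero_le l) (show l ≤ n by omega),
        ← Finset.prod_Ico_consecutive _ (show l ≤ j + 1 by omega) (show j + 1 ≤ n by omega),
        ← Finset.range_eq_Ico, eL, eI, eR]
      ring
    rw [Finset.sum_congr rfl fun m0 _ => by rw [hXsplit, hRsplit]]
    unfold falpha fbeta
    rw [Finset.mul_sum]
    refine Finset.sum_congr rfl fun m0 _ => ?_
    rw [ite_one_zero_and]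
    ring
  exact condMI_eq_zero_of_factor hp.nonneg _ _ _
    (falpha M d𝒳 dR l j i i' h1) (fbeta M d𝒳 dR l j i i') hα hβ hfac

end Main

/-- Claim `micindependence`: for a `k`-pass streaming algorithm on a
product distribution, for all `i ∈ {1,…,k}` and `j, ℓ ∈ [n]` with `ℓ ≤ j`:
(1) `I(X_{[ℓ,j]}, R_{(≤k,[ℓ,j])}; X_{[1,ℓ-1]}, R_{(≤k,[1,ℓ-1])}, X_{[j+1,n]}, R_{(≤k,[j+1,n])}
      | M_{(≤i,ℓ-1)}, M_{(≤i-1,j)}) = 0`, and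
(2) the same with conditioning `(M_{(≤i,ℓ-1)}, M_{(≤i,j)})`.
Here `l` and `j` below are the 0-shifted versions of the paper's `ℓ` and `j`
(so `l ≤ j < n` corresponds to `1 ≤ ℓ ≤ j ≤ n`); `X_{[ℓ,j]}` consists of the `j - l + 1`
entries `X (l+r)`, and `M_{(r,q)}` is `M.st (r-1) q`. -/
theorem mic_block_independence
    {Ω : Type} [Fintype Ω] {p : Ω → ℝ} {𝒳 : Type} [Fintype 𝒳] {n k : ℕ}
    {X : ℕ → Ω → 𝒳}
    (hp : IsPMF p) (hprod : IsProduct p n X)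
    (M : Alg Ω p 𝒳 n k X) :
    ∀ i : ℕ, 1 ≤ i → i ≤ k → ∀ l j : ℕ, l ≤ j → j < n →
      (condMI p
        (fun ω => ((fun r : Fin (j - l + 1) => X (l + r.1) ω),
                   (fun (i' : Fin k) (r : Fin (j - l + 1)) => M.R i'.1 (l + r.1) ω)))
        (fun ω => ((fun r : Fin l => X r.1 ω),
                   (fun (i' : Fin k) (r : Fin l) => M.R i'.1 r.1 ω),
                   (fun r : Fin (n - (j + 1)) => X (j + 1 + r.1) ω),
                   (fun (i' : Fin k) (r : Fin (n - (j + 1))) => M.R i'.1 (j + 1 + r.1) ω)))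
        (fun ω => ((fun r : Fin i => M.st r.1 l ω),
                   (fun r : Fin (i - 1) => M.st r.1 (j + 1) ω))) = 0)
      ∧ (condMI p
        (fun ω => ((fun r : Fin (j - l + 1) => X (l + r.1) ω),
                   (fun (i' : Fin k) (r : Fin (j - l + 1)) => M.R i'.1 (l + r.1) ω)))
        (fun ω => ((fun r : Fin l => X r.1 ω),
                   (fun (i' : Fin k) (r : Fin l) => M.R i'.1 r.1 ω),
                   (fun r : Fin (n - (j + 1)) => X (j + 1 + r.1) ω),
                   (fun (i' : Fin k) (r : Fin (n - (j + 1))) => M.R i'.1 (j + 1 + r.1) ω)))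
        (fun ω => ((fun r : Fin i => M.st r.1 l ω),
                   (fun r : Fin i => M.st r.1 (j + 1) ω))) = 0) := by
  intro i hi hik l j hlj hjn
  exact ⟨main_aux M hp hprod i (i - 1) (by omega) (by omega) l j hlj hjn,
         main_aux M hp hprod i i le_rfl (by omega) l j hlj hjn⟩

end MultiPassIC
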